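/- Let H be a complex Hilbert space, let {P_a}_{a=1}^c and {Q_b}_{b=1}^c be PVMs with c outputs in M_n(B(H)) whose entries commute (P_{a,ij} Q_{b,kl} = Q_{b,kl} P_{a,ij} for all indices), and let ψ ∈ H be a unit vector such that Σ_{i,j=1}^n ⟨P_{a,ij} Q_{b,ij} ψ, ψ⟩ = 0 for all a ≠ b. Then the vector state ρ(T) = ⟨T ψ, ψ⟩ is tracial on the *-subalgebra of B(H) generated by the entries {P_{a,ij} : 1 ≤ a ≤ c, 1 ≤ i,j ≤ n}; that is, ⟨xy ψ, ψ⟩ = ⟨yx ψ, ψ⟩ for all x, y in the *-subalgebra of B(H) generated by these entries. -/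

import Mathlib

open scoped ENNReal

set_option synthInstance.maxHeartbeats 1000000
set_option maxHeartbeats 1000000

noncomputable section

instance piLpCompleteSpace {ι : Type*} (p : ℝ≥0∞) (β : ι → Type*)
    [∀ i, UniformSpace (β i)] [∀ i, CompleteSpace (β i)] : CompleteSpace (PiLp p β) :=
  (PiLp.uniformEquiv p β).completeSpace_iff.2 inferInstance

/-- The isometric embedding of `E` onto the `i`-th coordinate of the
ℓ²-direct sum of `n` copies of `E`. -/
def inclPi (E : Type*) [NormedAddCommGroup E] [InnerProductSpace ℂ E]
    (n : ℕ) (i : Fin n) : E →L[ℂ] PiLp 2 (fun _ : Fin n => E) :=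
  (PiLp.continuousLinearEquiv 2 ℂ (fun _ : Fin n => E)).symm.toContinuousLinearMap.comp
    (ContinuousLinearMap.pi fun j => if j = i then ContinuousLinearMap.id ℂ E else 0)

/-- The continuous linear projection onto the `i`-th coordinate of the
ℓ²-direct sum of `n` copies of `E`. -/
def projPi (E : Type*) [NormedAddCommGroup E] [InnerProductSpace ℂ E]
    (n : ℕ) (i : Fin n) : PiLp 2 (fun _ : Fin n => E) →L[ℂ] E :=
  (ContinuousLinearMap.proj i).comp
    (PiLp.continuousLinearEquiv 2 ℂ (fun _ : Fin n => E)).toContinuousLinearMap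

/-- The operator on the ℓ²-direct sum `E^n` associated to an `n × n` matrix of bounded
operators on `E`, acting by `(T ξ) i = ∑ j, T i j (ξ j)`. -/
def matToOp {E : Type*} [NormedAddCommGroup E] [InnerProductSpace ℂ E] {n : ℕ}
    (T : Matrix (Fin n) (Fin n) (E →L[ℂ] E)) :
    PiLp 2 (fun _ : Fin n => E) →L[ℂ] PiLp 2 (fun _ : Fin n => E) :=
  ∑ i, ∑ j, (inclPi E n i).comp ((T i j).comp (projPi E n j))


section AuxLemmas

variable {H : Type*} [NormedAddCommGroup H] [InnerProductSpace ℂ H] {n : ℕ}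

lemma piLp_sum_apply {ι : Type*} (s : Finset ι) (g : ι → PiLp 2 (fun _ : Fin n => H)) (i : Fin n) :
    (∑ x ∈ s, g x) i = ∑ x ∈ s, g x i := by
  have h := map_sum ((PiLp.continuousLinearEquiv 2 ℂ (fun _ : Fin n => H)).toLinearEquiv) g s
  calc (∑ x ∈ s, g x) i
      = ((PiLp.continuousLinearEquiv 2 ℂ (fun _ : Fin n => H)).toLinearEquiv (∑ x ∈ s, g x)) i := rfl
    _ = ∑ x ∈ s, g x i := by rw [h]; simp [Finset.sum_apply]

lemma inclPi_apply (i k : Fin n) (x : H) : inclPi H n i x k = if k = i then x else 0 := by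
  simp [inclPi, apply_ite (fun f : H →L[ℂ] H => f x)]

lemma sum_swap3 {α β γ M : Type*} [AddCommMonoid M] [Fintype α] [Fintype β] [Fintype γ]
    (f : α → β → γ → M) :
    ∑ a, ∑ b, ∑ c, f a b c = ∑ b, ∑ c, ∑ a, f a b c := by
  rw [Finset.sum_comm]
  exact Finset.sum_congr rfl fun b _ => Finset.sum_comm

lemma matToOp_apply (T : Matrix (Fin n) (Fin n) (H →L[ℂ] H)) (ξ : PiLp 2 (fun _ : Fin n => H))
    (i : Fin n) : matToOp T ξ i = ∑ j, T i j (ξ j) := by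
  simp only [matToOp, ContinuousLinearMap.sum_apply, piLp_sum_apply,
    ContinuousLinearMap.comp_apply, inclPi_apply]
  rw [Finset.sum_comm]
  simp [Finset.sum_ite_eq, projPi]

lemma matToOp_apply_incl (T : Matrix (Fin n) (Fin n) (H →L[ℂ] H)) (i k : Fin n) (x : H) :
    matToOp T (inclPi H n k x) i = T i k x := by
  rw [matToOp_apply, Finset.sum_eq_single k (fun m _ hm => by simp [inclPi_apply, hm])
    (by simp)]
  simp [inclPi_apply]

lemma inner_inclPi_right (ξ : PiLp 2 (fun _ : Fin n => H)) (j : Fin n) (y : H) :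
    (inner ℂ ξ (inclPi H n j y) : ℂ) = inner ℂ (ξ j) y := by
  rw [PiLp.inner_apply, Finset.sum_eq_single j (fun m _ hm => by simp [inclPi_apply, hm])
    (by simp)]
  simp [inclPi_apply]

lemma inner_inclPi_left (ξ : PiLp 2 (fun _ : Fin n => H)) (i : Fin n) (x : H) :
    (inner ℂ (inclPi H n i x) ξ : ℂ) = inner ℂ x (ξ i) := by
  rw [PiLp.inner_apply, Finset.sum_eq_single i (fun m _ hm => by simp [inclPi_apply, hm])
    (by simp)]
  simp [inclPi_apply]

variable [CompleteSpace H]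

lemma entry_adjoint (T : Matrix (Fin n) (Fin n) (H →L[ℂ] H))
    (h : IsSelfAdjoint (matToOp T)) (i j : Fin n) :
    ContinuousLinearMap.adjoint (T i j) = T j i := by
  have hT : ContinuousLinearMap.adjoint (matToOp T) = matToOp T := by
    rw [← ContinuousLinearMap.star_eq_adjoint]; exact h
  symm
  rw [ContinuousLinearMap.eq_adjoint_iff]
  intro x y
  have h1 : (inner ℂ (matToOp T (inclPi H n i x)) (inclPi H n j y) : ℂ)
      = inner ℂ (inclPi H n i x) (matToOp T (inclPi H n j y)) := by
    conv_lhs => rw [← hT]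
    rw [ContinuousLinearMap.adjoint_inner_left]
  rwa [inner_inclPi_right, inner_inclPi_left, matToOp_apply_incl, matToOp_apply_incl] at h1

lemma entry_idem (T : Matrix (Fin n) (Fin n) (H →L[ℂ] H))
    (h : (matToOp T).comp (matToOp T) = matToOp T) (i k : Fin n) (v : H) :
    ∑ j, T i j (T j k v) = T i k v := by
  have e1 : matToOp T (matToOp T (inclPi H n k v)) i = matToOp T (inclPi H n k v) i := by
    rw [← ContinuousLinearMap.comp_apply, h]
  rw [matToOp_apply_incl] at e1
  rw [matToOp_apply] at e1
  simp only [matToOp_apply_incl] at e1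
  exact e1

lemma entry_sum {c : ℕ} (P : Fin c → Matrix (Fin n) (Fin n) (H →L[ℂ] H))
    (h : ∑ a, matToOp (P a) = 1) (i k : Fin n) (v : H) :
    ∑ a, P a i k v = if i = k then v else 0 := by
  have h2 := congrArg
    (fun M : PiLp 2 (fun _ : Fin n => H) →L[ℂ] PiLp 2 (fun _ : Fin n => H)
      => M (inclPi H n k v) i) h
  simpa only [ContinuousLinearMap.sum_apply, piLp_sum_apply, matToOp_apply_incl,
    ContinuousLinearMap.one_apply, inclPi_apply] using h2

end AuxLemmas

/-- **Theorem (synchronicity condition, part 2).**  Let `{P_a}` and `{Q_b}` be PVMs with `c`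
outputs in `M_n(B(H))` with mutually commuting entries and let `ψ ∈ H` be a unit vector such
that the associated correlation is synchronous.  Then the vector state `ρ(T) = ⟨T ψ, ψ⟩` is
tracial on the *-subalgebra of `B(H)` generated by the entries
`{P_{a,ij} : 1 ≤ a ≤ c, 1 ≤ i,j ≤ n}`: for all `x, y` in that *-subalgebra,
`⟨xy ψ, ψ⟩ = ⟨yx ψ, ψ⟩`. -/
theorem synchronous_gives_trace {H : Type*} [NormedAddCommGroup H]
    [InnerProductSpace ℂ H] [CompleteSpace H] (n c : ℕ)
    (P Q : Fin c → Matrix (Fin n) (Fin n) (H →L[ℂ] H))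
    (hPadj : ∀ a, IsSelfAdjoint (matToOp (P a)))
    (hPidem : ∀ a, (matToOp (P a)).comp (matToOp (P a)) = matToOp (P a))
    (hPsum : ∑ a, matToOp (P a) = 1)
    (hQadj : ∀ b, IsSelfAdjoint (matToOp (Q b)))
    (hQidem : ∀ b, (matToOp (Q b)).comp (matToOp (Q b)) = matToOp (Q b))
    (hQsum : ∑ b, matToOp (Q b) = 1)
    (hcomm : ∀ a b i j k l, (P a i j).comp (Q b k l) = (Q b k l).comp (P a i j))
    (ψ : H) (hψ : ‖ψ‖ = 1)
    (hsync : ∀ a b : Fin c, a ≠ b →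
      ∑ i, ∑ j, (inner ℂ ψ ((P a i j) ((Q b i j) ψ)) : ℂ) = 0) :
    ∀ x y : H →L[ℂ] H,
      x ∈ StarAlgebra.adjoin ℂ {T : H →L[ℂ] H | ∃ a i j, T = P a i j} →
      y ∈ StarAlgebra.adjoin ℂ {T : H →L[ℂ] H | ∃ a i j, T = P a i j} →
      (inner ℂ ψ ((x * y) ψ) : ℂ) = (inner ℂ ψ ((y * x) ψ) : ℂ) := by
  intro x y hx hy
  -- adjoint relations for entries
  have hadjP : ∀ a (i j : Fin n), ContinuousLinearMap.adjoint (P a i j) = P a j i :=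
    fun a i j => entry_adjoint (P a) (hPadj a) i j
  have hadjQ : ∀ a (i j : Fin n), ContinuousLinearMap.adjoint (Q a i j) = Q a j i :=
    fun a i j => entry_adjoint (Q a) (hQadj a) i j
  have hip : ∀ a (i j : Fin n) (u w : H),
      (inner ℂ (P a i j u) w : ℂ) = inner ℂ u (P a j i w) := by
    intro a i j u w
    rw [← hadjP a j i, ContinuousLinearMap.adjoint_inner_left]
  have hiq : ∀ a (i j : Fin n) (u w : H),
      (inner ℂ (Q a i j u) w : ℂ) = inner ℂ u (Q a j i w) := by
    intro a i j u w
    rw [← hadjQ a j i, ContinuousLinearMap.adjoint_inner_left]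
  have hpsi : (inner ℂ ψ ψ : ℂ) = 1 := by
    rw [inner_self_eq_norm_sq_to_K, hψ]; norm_num
  -- the three sum computations
  have hA : ∑ a, ∑ i, ∑ k, ‖P a i k ψ‖ ^ 2 = (n : ℝ) := by
    have h1 : ∀ a : Fin c, ∑ i, ∑ k, ‖P a i k ψ‖ ^ 2
        = ∑ k, RCLike.re (inner ℂ ψ (P a k k ψ) : ℂ) := by
      intro a
      rw [Finset.sum_comm]
      refine Finset.sum_congr rfl fun k _ => ?_
      calc ∑ i, ‖P a i k ψ‖ ^ 2
          = ∑ i, RCLike.re (inner ℂ ψ (P a k i (P a i k ψ)) : ℂ) := by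
            refine Finset.sum_congr rfl fun i _ => ?_
            rw [← inner_self_eq_norm_sq (𝕜 := ℂ), hip a i k ψ (P a i k ψ)]
        _ = RCLike.re (∑ i, (inner ℂ ψ (P a k i (P a i k ψ)) : ℂ)) := by rw [map_sum]
        _ = RCLike.re (inner ℂ ψ (∑ i, P a k i (P a i k ψ)) : ℂ) := by rw [inner_sum]
        _ = RCLike.re (inner ℂ ψ (P a k k ψ) : ℂ) := by
            rw [entry_idem (P a) (hPidem a) k k ψ]
    rw [Finset.sum_congr rfl fun a _ => h1 a, Finset.sum_comm]
    have h2 : ∀ k : Fin n, ∑ a, RCLike.re (inner ℂ ψ (P a k k ψ) : ℂ) = 1 := by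
      intro k
      rw [← map_sum, ← inner_sum, entry_sum P hPsum k k ψ]
      simp [hpsi, hψ]
    rw [Finset.sum_congr rfl fun k _ => h2 k]
    simp
  have hB : ∑ a, ∑ i, ∑ k, ‖Q a k i ψ‖ ^ 2 = (n : ℝ) := by
    have h1 : ∀ a : Fin c, ∑ i, ∑ k, ‖Q a k i ψ‖ ^ 2
        = ∑ i, RCLike.re (inner ℂ ψ (Q a i i ψ) : ℂ) := by
      intro a
      refine Finset.sum_congr rfl fun i _ => ?_
      calc ∑ k, ‖Q a k i ψ‖ ^ 2
          = ∑ k, RCLike.re (inner ℂ ψ (Q a i k (Q a k i ψ)) : ℂ) := by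
            refine Finset.sum_congr rfl fun k _ => ?_
            rw [← inner_self_eq_norm_sq (𝕜 := ℂ), hiq a k i ψ (Q a k i ψ)]
        _ = RCLike.re (∑ k, (inner ℂ ψ (Q a i k (Q a k i ψ)) : ℂ)) := by rw [map_sum]
        _ = RCLike.re (inner ℂ ψ (∑ k, Q a i k (Q a k i ψ)) : ℂ) := by rw [inner_sum]
        _ = RCLike.re (inner ℂ ψ (Q a i i ψ) : ℂ) := by
            rw [entry_idem (Q a) (hQidem a) i i ψ]
    rw [Finset.sum_congr rfl fun a _ => h1 a, Finset.sum_comm]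
    have h2 : ∀ i : Fin n, ∑ a, RCLike.re (inner ℂ ψ (Q a i i ψ) : ℂ) = 1 := by
      intro i
      rw [← map_sum, ← inner_sum, entry_sum Q hQsum i i ψ]
      simp [hpsi, hψ]
    rw [Finset.sum_congr rfl fun i _ => h2 i]
    simp
  have hC : ∑ a, ∑ i, ∑ k, (inner ℂ (P a i k ψ) (Q a k i ψ) : ℂ) = (n : ℂ) := by
    have h1 : ∀ a : Fin c, ∑ i, ∑ k, (inner ℂ (P a i k ψ) (Q a k i ψ) : ℂ)
        = ∑ i, ∑ j, (inner ℂ ψ (P a i j (Q a i j ψ)) : ℂ) := by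
      intro a
      rw [Finset.sum_comm]
      exact Finset.sum_congr rfl fun k _ => Finset.sum_congr rfl fun i _ =>
        hip a i k ψ (Q a k i ψ)
    rw [Finset.sum_congr rfl fun a _ => h1 a]
    have h2 : ∑ a, ∑ b, ∑ i, ∑ j, (inner ℂ ψ (P a i j (Q b i j ψ)) : ℂ)
        = ∑ a, ∑ i, ∑ j, (inner ℂ ψ (P a i j (Q a i j ψ)) : ℂ) := by
      refine Finset.sum_congr rfl fun a _ => ?_
      rw [Finset.sum_eq_single a (fun b _ hb => hsync a b (Ne.symm hb))
        (fun h => absurd (Finset.mem_univ a) h)]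
    rw [← h2]
    have h3 : ∀ a : Fin c, ∑ b, ∑ i, ∑ j, (inner ℂ ψ (P a i j (Q b i j ψ)) : ℂ)
        = ∑ i, ∑ j, (inner ℂ ψ (P a i j (if i = j then ψ else 0)) : ℂ) := by
      intro a
      rw [sum_swap3]
      refine Finset.sum_congr rfl fun i _ => Finset.sum_congr rfl fun j _ => ?_
      rw [← entry_sum Q hQsum i j ψ, map_sum, inner_sum]
    rw [Finset.sum_congr rfl fun a _ => h3 a]
    have h4 : ∑ a, ∑ i, ∑ j, (inner ℂ ψ (P a i j (if i = j then ψ else 0)) : ℂ)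
        = ∑ i : Fin n, ∑ j : Fin n,
            (inner ℂ ψ (if i = j then (if i = j then ψ else 0) else 0) : ℂ) := by
      rw [sum_swap3]
      refine Finset.sum_congr rfl fun i _ => Finset.sum_congr rfl fun j _ => ?_
      rw [← entry_sum P hPsum i j (if i = j then ψ else 0), inner_sum]
    rw [h4]
    have h5 : ∀ i j : Fin n,
        (inner ℂ ψ (if i = j then (if i = j then ψ else 0) else 0) : ℂ)
          = if i = j then 1 else 0 := by
      intro i j; by_cases h : i = j <;> simp [h, hpsi, hψ]
    simp [h5]
  -- the synchronous condition forces the vectors to agree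
  have key : ∀ a (i k : Fin n), P a i k ψ = Q a k i ψ := by
    have main : ∑ a, ∑ i, ∑ k, ‖P a i k ψ - Q a k i ψ‖ ^ 2 = 0 := by
      have e : ∀ a (i k : Fin n), ‖P a i k ψ - Q a k i ψ‖ ^ 2
          = ‖P a i k ψ‖ ^ 2 - 2 * RCLike.re (inner ℂ (P a i k ψ) (Q a k i ψ) : ℂ)
            + ‖Q a k i ψ‖ ^ 2 := fun a i k => norm_sub_sq _ _
      calc ∑ a, ∑ i, ∑ k, ‖P a i k ψ - Q a k i ψ‖ ^ 2
          = (∑ a, ∑ i, ∑ k, ‖P a i k ψ‖ ^ 2)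
            - 2 * RCLike.re (∑ a, ∑ i, ∑ k, (inner ℂ (P a i k ψ) (Q a k i ψ) : ℂ))
            + ∑ a, ∑ i, ∑ k, ‖Q a k i ψ‖ ^ 2 := by
            simp only [e, Finset.sum_add_distrib, Finset.sum_sub_distrib, map_sum,
              ← Finset.mul_sum]
        _ = (n : ℝ) - 2 * RCLike.re ((n : ℂ)) + (n : ℝ) := by rw [hA, hB, hC]
        _ = 0 := by simp; ring
    intro a i k
    have h0 : ∀ a ∈ (Finset.univ : Finset (Fin c)),
        (0:ℝ) ≤ ∑ i, ∑ k, ‖P a i k ψ - Q a k i ψ‖ ^ 2 := fun _ _ =>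
      Finset.sum_nonneg fun _ _ => Finset.sum_nonneg fun _ _ => sq_nonneg _
    have h1 := (Finset.sum_eq_zero_iff_of_nonneg h0).mp main a (Finset.mem_univ a)
    have h2 := (Finset.sum_eq_zero_iff_of_nonneg
      (fun _ _ => Finset.sum_nonneg fun _ _ => sq_nonneg _)).mp h1 i (Finset.mem_univ i)
    have h3 := (Finset.sum_eq_zero_iff_of_nonneg
      (fun _ _ => sq_nonneg _)).mp h2 k (Finset.mem_univ k)
    exact sub_eq_zero.mp (norm_eq_zero.mp
      ((pow_eq_zero_iff (two_ne_zero)).mp h3))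
  -- every element of the star subalgebra commutes with the Q entries
  have hxQ : ∀ x : H →L[ℂ] H,
      x ∈ StarAlgebra.adjoin ℂ {T : H →L[ℂ] H | ∃ a i j, T = P a i j} →
      ∀ b (k l : Fin n), Commute (Q b k l) x := by
    intro x hx
    induction hx using StarAlgebra.adjoin_induction with
    | mem z hz =>
      obtain ⟨a, i, j, rfl⟩ := hz
      intro b k l
      show Q b k l * P a i j = P a i j * Q b k l
      rw [ContinuousLinearMap.mul_def, ContinuousLinearMap.mul_def]
      exact (hcomm a b i j k l).symm
    | algebraMap r => intro b k l; exact (Algebra.commutes r (Q b k l)).symm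
    | add u v hu hv ihu ihv => intro b k l; exact (ihu b k l).add_right (ihv b k l)
    | mul u v hu hv ihu ihv => intro b k l; exact (ihu b k l).mul_right (ihv b k l)
    | star u hu ih =>
      intro b k l
      have h2 := (ih b l k).star_star
      rwa [ContinuousLinearMap.star_eq_adjoint (Q b l k), hadjQ b l k] at h2
  -- the trace identity for a generator
  have hgen : ∀ x : H →L[ℂ] H,
      x ∈ StarAlgebra.adjoin ℂ {T : H →L[ℂ] H | ∃ a i j, T = P a i j} →
      ∀ a (i j : Fin n), (inner ℂ ψ (x (P a i j ψ)) : ℂ) = inner ℂ ψ (P a i j (x ψ)) := by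
    intro x hx a i j
    have hc := congrArg (fun M : H →L[ℂ] H => M ψ) (hxQ x hx a j i)
    simp only [ContinuousLinearMap.mul_apply] at hc
    calc (inner ℂ ψ (x (P a i j ψ)) : ℂ)
        = inner ℂ ψ (x (Q a j i ψ)) := by rw [key a i j]
      _ = inner ℂ ψ (Q a j i (x ψ)) := by rw [← hc]
      _ = inner ℂ (Q a i j ψ) (x ψ) := (hiq a i j ψ (x ψ)).symm
      _ = inner ℂ (P a j i ψ) (x ψ) := by rw [key a j i]
      _ = inner ℂ ψ (P a i j (x ψ)) := hip a j i ψ (x ψ)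
  -- main induction
  have mainInd : ∀ y' : H →L[ℂ] H,
      y' ∈ StarAlgebra.adjoin ℂ {T : H →L[ℂ] H | ∃ a i j, T = P a i j} →
      ∀ x' : H →L[ℂ] H,
      x' ∈ StarAlgebra.adjoin ℂ {T : H →L[ℂ] H | ∃ a i j, T = P a i j} →
      (inner ℂ ψ ((x' * y') ψ) : ℂ) = inner ℂ ψ ((y' * x') ψ) := by
    intro y' hy'
    induction hy' using StarAlgebra.adjoin_induction with
    | mem z hz =>
      intro x' hx'
      obtain ⟨a, i, j, rfl⟩ := hz
      simpa only [ContinuousLinearMap.mul_apply] using hgen x' hx' a i j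
    | algebraMap r => intro x' hx'; rw [Algebra.commutes]
    | add u v hu hv ihu ihv =>
      intro x' hx'
      simp only [mul_add, add_mul, ContinuousLinearMap.add_apply, inner_add_right]
      rw [ihu x' hx', ihv x' hx']
    | mul u v hu hv ihu ihv =>
      intro x' hx'
      have hxu : x' * u ∈ StarAlgebra.adjoin ℂ {T : H →L[ℂ] H | ∃ a i j, T = P a i j} :=
        mul_mem hx' hu
      have hvx : v * x' ∈ StarAlgebra.adjoin ℂ {T : H →L[ℂ] H | ∃ a i j, T = P a i j} :=
        mul_mem hv hx'
      calc (inner ℂ ψ ((x' * (u * v)) ψ) : ℂ)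
          = inner ℂ ψ (((x' * u) * v) ψ) := by rw [mul_assoc]
        _ = inner ℂ ψ ((v * (x' * u)) ψ) := ihv (x' * u) hxu
        _ = inner ℂ ψ (((v * x') * u) ψ) := by rw [mul_assoc]
        _ = inner ℂ ψ ((u * (v * x')) ψ) := ihu (v * x') hvx
        _ = inner ℂ ψ (((u * v) * x') ψ) := by rw [mul_assoc]
    | star u hu ih =>
      intro x' hx'
      have hstar : ∀ z : H →L[ℂ] H,
          (inner ℂ ψ ((star z) ψ) : ℂ) = starRingEnd ℂ (inner ℂ ψ (z ψ) : ℂ) := by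
        intro z
        rw [ContinuousLinearMap.star_eq_adjoint, ContinuousLinearMap.adjoint_inner_right,
          ← inner_conj_symm]
      calc (inner ℂ ψ ((x' * star u) ψ) : ℂ)
          = inner ℂ ψ ((star (u * star x')) ψ) := by rw [star_mul, star_star]
        _ = starRingEnd ℂ (inner ℂ ψ ((u * star x') ψ) : ℂ) := hstar _
        _ = starRingEnd ℂ (inner ℂ ψ ((star x' * u) ψ) : ℂ) := by
            rw [ih (star x') (star_mem hx')]
        _ = inner ℂ ψ ((star (star x' * u)) ψ) := (hstar _).symm
        _ = inner ℂ ψ ((star u * x') ψ) := by rw [star_mul, star_star]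
  exact mainInd y hy x hx
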